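/- arXiv:0710.0021 — 2 statements merged into one kernel-verified Lean document; each statement's English description precedes it below -/
import Mathlib

section
/- Let Ω be a bounded interval of positive length. The quasicrystal Λ_τ(Ω)={a+bτ : a,b∈ℤ, a+bτ'∈Ω} is relatively dense in ℝ: there exists R>0 such that every interval of length R in ℝ contains a point of Λ_τ(Ω). -/
noncomputable def τ : ℝ := (1 + Real.sqrt 5) / 2
noncomputable def τ' : ℝ := (1 - Real.sqrt 5) / 2

lemma sqrt5_sq : Real.sqrt 5 ^ 2 = 5 := Real.sq_sqrt (by norm_num)

lemma sqrt5_lt_3 : Real.sqrt 5 < 3 := by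
  nlinarith [sqrt5_sq, Real.sqrt_nonneg 5]

lemma sqrt5_gt_2 : 2 < Real.sqrt 5 := by
  nlinarith [sqrt5_sq, Real.sqrt_nonneg 5]

lemma tau_sq : τ ^ 2 = τ + 1 := by
  unfold τ; nlinarith [sqrt5_sq]

lemma tau'_sq : τ' ^ 2 = τ' + 1 := by
  unfold τ'; nlinarith [sqrt5_sq]

lemma tau_ge_one : 1 ≤ τ := by
  unfold τ; nlinarith [sqrt5_gt_2]

lemma tau'_sq_pos : 0 < τ' ^ 2 := by
  unfold τ'; nlinarith [sqrt5_gt_2]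

lemma tau'_sq_lt_one : τ' ^ 2 < 1 := by
  unfold τ'; nlinarith [sqrt5_gt_2, sqrt5_lt_3]

lemma pow_repr : ∀ n : ℕ, ∃ a b : ℤ, τ' ^ n = a + b * τ' ∧ τ ^ n = a + b * τ := by
  intro n
  induction n with
  | zero => exact ⟨1, 0, by norm_num, by norm_num⟩
  | succ n ih =>
    obtain ⟨a, b, h1, h2⟩ := ih
    refine ⟨b, a + b, ?_, ?_⟩
    · rw [pow_succ, h1]; push_cast
      linear_combination b * tau'_sq
    · rw [pow_succ, h2]; push_cast
      linear_combination b * tau_sq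

noncomputable def Λ (Ω : Set ℝ) : Set ℝ :=
  {x : ℝ | ∃ a b : ℤ, x = a + b * τ ∧ ((a : ℝ) + b * τ') ∈ Ω}

/-- For `Ω` a bounded interval of positive length, `Λ_τ(Ω)` is relatively
dense in `ℝ`: every interval of length `R` contains a point of it. -/
theorem quasicrystal_relatively_dense (c d : ℝ) (hd : 0 < d) :
    ∃ R > 0, ∀ t : ℝ, ∃ x ∈ Λ (Set.Ico c (c + d)), x ∈ Set.Icc t (t + R) := by
  -- find n with (τ'^2)^n < min d 1
  obtain ⟨n, hn⟩ := exists_pow_lt_of_lt_one (lt_min hd one_pos) tau'_sq_lt_one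
  obtain ⟨p, q, hpq', hpq⟩ := pow_repr (2 * n)
  set β : ℝ := (p : ℝ) + q * τ' with hβdef
  set γ : ℝ := (p : ℝ) + q * τ with hγdef
  have hβpow : τ' ^ (2 * n) = β := hpq'
  have hγpow : τ ^ (2 * n) = γ := hpq
  have hβpos : 0 < β := by
    rw [← hβpow, pow_mul]
    exact pow_pos tau'_sq_pos n
  have hβlt : β < min d 1 := by
    rw [← hβpow, pow_mul]; exact hn
  have hβd : β < d := lt_of_lt_of_le hβlt (min_le_left _ _)
  have hβ1 : β < 1 := lt_of_lt_of_le hβlt (min_le_right _ _)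
  have hγ1 : 1 ≤ γ := by
    rw [← hγpow]; exact one_le_pow₀ tau_ge_one
  set S : ℝ := γ - β with hSdef
  have hS : 0 < S := by simp only [hSdef]; linarith
  set M : ℕ := ⌈1 / β⌉₊ with hMdef
  have hM : 1 ≤ (M : ℝ) * β := by
    have h := Nat.le_ceil (1 / β)
    have h2 : (1 / β) * β ≤ (M : ℝ) * β :=
      mul_le_mul_of_nonneg_right h hβpos.le
    rwa [one_div, inv_mul_cancel₀ hβpos.ne'] at h2
  refine ⟨1 + (M + 1) * S, by positivity, ?_⟩
  -- the fractional-part function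
  set f : ℤ → ℝ := fun m => (⌈c - m * β⌉ : ℝ) - (c - m * β) with hfdef
  have hf0 : ∀ m, 0 ≤ f m := fun m => by
    simp only [hfdef, sub_nonneg]; exact Int.le_ceil _
  have hf1 : ∀ m, f m < 1 := fun m => by
    simp only [hfdef]
    have := Int.ceil_lt_add_one (c - m * β)
    linarith
  have step : ∀ m : ℤ, f (m + 1) = f m + β ∨ f (m + 1) < β := by
    intro m
    have h1 : ⌈c - (m + 1 : ℤ) * β⌉ ≤ ⌈c - m * β⌉ := by
      apply Int.ceil_le_ceil; push_cast; nlinarith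
    have h2 : ⌈c - m * β⌉ - 1 ≤ ⌈c - (m + 1 : ℤ) * β⌉ := by
      have h3 : ⌈c - m * β - 1⌉ ≤ ⌈c - (m + 1 : ℤ) * β⌉ := by
        apply Int.ceil_le_ceil; push_cast; nlinarith
      rwa [Int.ceil_sub_one] at h3
    have hceil : ⌈c - (m + 1 : ℤ) * β⌉ = ⌈c - m * β⌉ ∨
        ⌈c - (m + 1 : ℤ) * β⌉ = ⌈c - m * β⌉ - 1 := by omega
    rcases hceil with h | h
    · left; simp only [hfdef]; rw [h]; push_cast; ring
    · right
      have : f (m + 1) = f m + β - 1 := by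
        simp only [hfdef]; rw [h]; push_cast; ring
      have := hf1 m
      linarith [this]
  have key : ∀ m0 : ℤ, ∃ k : ℕ, k ≤ M ∧ f (m0 + k) < d := by
    intro m0
    by_contra hcon
    push_neg at hcon
    have grow : ∀ k : ℕ, k ≤ M → d + k * β ≤ f (m0 + k) := by
      intro k hk
      induction k with
      | zero => simpa using hcon 0 (Nat.zero_le _)
      | succ k ih =>
        have hk' : k ≤ M := Nat.le_of_succ_le hk
        have ih' := ih hk'
        have heq : (m0 + ((k : ℕ) + 1 : ℕ) : ℤ) = (m0 + k) + 1 := by push_cast; ring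
        rcases step (m0 + k) with h | h
        · rw [heq, h]; push_cast; linarith
        · exfalso
          have hc := hcon (k + 1) hk
          rw [heq] at hc
          linarith
    have h1 := grow M le_rfl
    have h2 := hf1 (m0 + M)
    linarith
  intro t
  set m0 : ℤ := ⌈(t - c) / S⌉ with hm0def
  obtain ⟨k, hkM, hfk⟩ := key m0
  set m : ℤ := m0 + k with hmdef
  set a : ℤ := ⌈c - m * β⌉ with hadef
  have hfa : f m = (a : ℝ) - (c - m * β) := rfl
  refine ⟨(↑(a + m * p) : ℝ) + ↑(m * q) * τ, ⟨a + m * p, m * q, rfl, ?_⟩, ?_, ?_⟩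
  · -- window condition
    have hval : (↑(a + m * p) : ℝ) + ↑(m * q) * τ' = c + f m := by
      rw [hfa]; push_cast; rw [hβdef]; ring
    rw [hval]
    constructor
    · linarith [hf0 m]
    · linarith [hfk]
  · -- lower bound t ≤ x
    have hxval : (↑(a + m * p) : ℝ) + ↑(m * q) * τ = c + f m + m * S := by
      rw [hfa]; push_cast; rw [hSdef, hγdef, hβdef]; ring
    rw [hxval]
    have hm0S : t - c ≤ (m0 : ℝ) * S := by
      rw [← div_le_iff₀ hS] at *
      exact_mod_cast (Int.le_ceil ((t - c) / S)).trans_eq rfl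
    have hmm0 : (m0 : ℝ) ≤ (m : ℝ) := by
      have : m0 ≤ m := by simp [hmdef]
      exact_mod_cast this
    have : (m0 : ℝ) * S ≤ (m : ℝ) * S := mul_le_mul_of_nonneg_right hmm0 hS.le
    linarith [hf0 m]
  · -- upper bound x ≤ t + R
    have hxval : (↑(a + m * p) : ℝ) + ↑(m * q) * τ = c + f m + m * S := by
      rw [hfa]; push_cast; rw [hSdef, hγdef, hβdef]; ring
    rw [hxval]
    have hm0up : (m0 : ℝ) < (t - c) / S + 1 := by
      exact_mod_cast Int.ceil_lt_add_one ((t - c) / S)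
    have hm0S : (m0 : ℝ) * S < t - c + S := by
      have := mul_lt_mul_of_pos_right hm0up hS
      rwa [add_mul, div_mul_cancel₀ _ hS.ne', one_mul] at this
    have hmup : (m : ℝ) ≤ (m0 : ℝ) + M := by
      have : m ≤ m0 + M := by
        simp only [hmdef]
        exact Int.add_le_add_left (by exact_mod_cast hkM) m0
      exact_mod_cast this
    have hmS : (m : ℝ) * S ≤ ((m0 : ℝ) + M) * S := mul_le_mul_of_nonneg_right hmup hS.le
    have := hf1 m
    nlinarith [hf1 m]
end

section
/- For any bounded interval Ω with nonempty interior, the quasicrystal Λ_τ(Ω) is aperiodic: there is no nonzero real t with t+Λ_τ(Ω)=Λ_τ(Ω). -/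
lemma irr_sqrt5 : Irrational (Real.sqrt 5) := by
  have := Nat.Prime.irrational_sqrt (p := 5) (by norm_num)
  simpa using this

lemma irr_tau : Irrational τ := by
  unfold τ
  have := (irr_sqrt5.ratCast_add (q := 1)).div_ratCast (q := 2) (by norm_num)
  simpa using this

lemma irr_tau' : Irrational τ' := by
  unfold τ'
  have : Irrational (-Real.sqrt 5) := irr_sqrt5.neg
  have := (this.ratCast_add (q := 1)).div_ratCast (q := 2) (by norm_num)
  simpa [sub_eq_add_neg] using this

lemma indep (x : ℝ) (hx : Irrational x) (m n : ℤ) (h : (m : ℝ) + n * x = 0) :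
    m = 0 ∧ n = 0 := by
  rcases eq_or_ne n 0 with hn | hn
  · subst hn; simp at h ⊢; exact_mod_cast h
  · exfalso
    have hx' : x = ((-m / n : ℚ) : ℝ) := by
      have hn' : (n : ℝ) ≠ 0 := Int.cast_ne_zero.2 hn
      push_cast
      field_simp
      linarith [h]
    exact hx ⟨-m / n, hx'.symm⟩

lemma uniq_tau (m n m' n' : ℤ) (h : (m : ℝ) + n * τ = m' + n' * τ) :
    m = m' ∧ n = n' := by
  have h0 : ((m - m' : ℤ) : ℝ) + (n - n' : ℤ) * τ = 0 := by push_cast; ring_nf; linarith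
  obtain ⟨h1, h2⟩ := indep τ irr_tau _ _ h0
  omega

/-- For any bounded interval `Ω` with nonempty interior, `Λ_τ(Ω)` is
aperiodic: no nonzero real `t` satisfies `t + Λ_τ(Ω) = Λ_τ(Ω)`. -/
theorem quasicrystal_aperiodic (c d : ℝ) (hd : 0 < d) (t : ℝ) (ht : t ≠ 0) :
    (fun x => t + x) '' Λ (Set.Ico c (c + d)) ≠ Λ (Set.Ico c (c + d)) := by
  intro h
  set Ω := Set.Ico c (c + d) with hΩ
  -- the subgroup ℤ + ℤτ' is dense
  let S : AddSubgroup ℝ :=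
    { carrier := {x | ∃ a b : ℤ, x = (a : ℝ) + b * τ'}
      zero_mem' := ⟨0, 0, by simp⟩
      add_mem' := by
        rintro x y ⟨a, b, rfl⟩ ⟨a', b', rfl⟩
        exact ⟨a + a', b + b', by push_cast; ring⟩
      neg_mem' := by
        rintro x ⟨a, b, rfl⟩
        exact ⟨-a, -b, by push_cast; ring⟩ }
  have hdense : Dense (S : Set ℝ) := by
    rcases S.dense_or_cyclic with hD | ⟨g, hg⟩
    · exact hD
    · exfalso
      have h1 : (1 : ℝ) ∈ S := ⟨1, 0, by simp⟩
      have h2 : τ' ∈ S := ⟨0, 1, by simp⟩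
      rw [hg, AddSubgroup.mem_closure_singleton] at h1 h2
      obtain ⟨m, hm⟩ := h1
      obtain ⟨n, hn⟩ := h2
      have hm0 : m ≠ 0 := by rintro rfl; simp at hm
      have hm0' : (m : ℝ) ≠ 0 := Int.cast_ne_zero.2 hm0
      have hmg : (m : ℝ) * g = 1 := by rw [← zsmul_eq_mul]; exact hm
      have hng : (n : ℝ) * g = τ' := by rw [← zsmul_eq_mul]; exact hn
      have hnm : (n : ℝ) = τ' * m := by rw [← hng, mul_assoc, mul_comm g, hmg, mul_one]
      refine irr_tau' ⟨n / m, ?_⟩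
      push_cast
      rw [hnm]
      field_simp
  -- get a starting point
  obtain ⟨x, hxS, hxΩ⟩ : ∃ x ∈ (S : Set ℝ), x ∈ Set.Ioo c (c + d) := by
    have : (Set.Ioo c (c + d)).Nonempty := ⟨c + d / 2, by constructor <;> linarith⟩
    obtain ⟨x, hx1, hx2⟩ := hdense.exists_mem_open isOpen_Ioo this
    exact ⟨x, hx1, hx2⟩
  obtain ⟨a₀, b₀, hx⟩ := hxS
  have hstar₀ : ((a₀ : ℝ) + b₀ * τ') ∈ Ω := by
    rw [← hx]; exact Set.Ioo_subset_Ico_self hxΩ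
  have hx₀ : ((a₀ : ℝ) + b₀ * τ) ∈ Λ Ω := ⟨a₀, b₀, rfl, hstar₀⟩
  have hstep : ∀ y ∈ Λ Ω, t + y ∈ Λ Ω := by
    intro y hy
    rw [← h]
    exact ⟨y, hy, rfl⟩
  -- t is of the form p + qτ
  obtain ⟨a₁, b₁, heq, -⟩ := hstep _ hx₀
  set p : ℤ := a₁ - a₀ with hp
  set q : ℤ := b₁ - b₀ with hq
  have htpq : t = (p : ℝ) + q * τ := by
    have h' : t = ((a₁ : ℝ) + b₁ * τ) - ((a₀ : ℝ) + b₀ * τ) := by linarith [heq]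
    rw [h', hp, hq]; push_cast; ring
  -- induction: stars stay in Ω
  have key : ∀ n : ℕ, ((a₀ + n * p : ℤ) : ℝ) + ((b₀ + n * q : ℤ) : ℝ) * τ' ∈ Ω := by
    intro n
    induction n with
    | zero => simpa using hstar₀
    | succ n ih =>
      have hyn : ((a₀ + n * p : ℤ) : ℝ) + ((b₀ + n * q : ℤ) : ℝ) * τ ∈ Λ Ω :=
        ⟨_, _, rfl, ih⟩
      obtain ⟨a', b', heq', hst'⟩ := hstep _ hyn
      have : ((a₀ + (n + 1) * p : ℤ) : ℝ) + ((b₀ + (n + 1) * q : ℤ) : ℝ) * τ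
          = (a' : ℝ) + b' * τ := by
        rw [← heq', htpq]; push_cast; ring
      obtain ⟨h1, h2⟩ := uniq_tau _ _ _ _ this
      rw [← h1, ← h2] at hst'
      exact_mod_cast hst'
  -- the shadow shift s = p + qτ' is nonzero
  set s : ℝ := (p : ℝ) + q * τ' with hs
  have hs0 : s ≠ 0 := by
    intro h0
    obtain ⟨hp0, hq0⟩ := indep τ' irr_tau' p q h0
    apply ht
    rw [htpq, hp0, hq0]; simp
  -- rewrite key
  have key' : ∀ n : ℕ, ((a₀ : ℝ) + b₀ * τ') + n * s ∈ Ω := by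
    intro n
    have := key n
    have e : ((a₀ + n * p : ℤ) : ℝ) + ((b₀ + n * q : ℤ) : ℝ) * τ'
        = ((a₀ : ℝ) + b₀ * τ') + n * s := by push_cast; ring
    rwa [e] at this
  set x₀ := (a₀ : ℝ) + b₀ * τ'
  rcases lt_or_gt_of_ne hs0 with hneg | hpos
  · obtain ⟨n, hn⟩ := exists_nat_gt ((x₀ - c) / (-s))
    have := (key' n).1
    have : x₀ + n * s < c := by
      have h1 : (x₀ - c) < n * (-s) := by
        rwa [div_lt_iff₀ (by linarith)] at hn
      nlinarith
    linarith [(key' n).1]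
  · obtain ⟨n, hn⟩ := exists_nat_gt ((c + d - x₀) / s)
    have h1 : c + d - x₀ < n * s := by rwa [div_lt_iff₀ hpos] at hn
    have := (key' n).2
    linarith
end
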